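/- arXiv:1803.04516 — 2 statements merged into one kernel-verified Lean document; each statement's English description precedes it below -/
import Mathlib

section
/- Let n ≥ 2, let φ be real with 0 < φ < 1 and γ > 0, and set b = 1, c = (1+γ+φ²)/φ, d = (1+γ)/φ, λ = φ. Then the corresponding n×n tridiagonal matrix Q is invertible and the sum s_i of the i-th row of Q^{-1} satisfies 1/(d − φ) < s_i < 1/(c − 2) for every i = 1, …, n. -/
/-- The sequence β₀ = 1, β₁ = d, βᵢ = c βᵢ₋₁ − βᵢ₋₂. -/
noncomputable def beta (c d : ℝ) : ℕ → ℝ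
  | 0 => 1
  | 1 => d
  | i + 2 => c * beta c d (i + 1) - beta c d i

/-- The n×n symmetric tridiagonal matrix with diagonal (d, c, …, c, d) and
off-diagonal entries −b. -/
noncomputable def triQ (n : ℕ) (b c d : ℝ) : Matrix (Fin n) (Fin n) ℝ :=
  Matrix.of fun i j =>
    if i = j then (if (i : ℕ) = 0 ∨ (i : ℕ) = n - 1 then d else c)
    else if (i : ℕ) + 1 = (j : ℕ) ∨ (j : ℕ) + 1 = (i : ℕ) then -b else 0

lemma sum_ite_coe {n : ℕ} (k : ℕ) (f : Fin n → ℝ) :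
    ∑ j : Fin n, (if (j : ℕ) = k then f j else 0) =
      if h : k < n then f ⟨k, h⟩ else 0 := by
  split
  · next h =>
    rw [Finset.sum_eq_single (⟨k, h⟩ : Fin n)]
    · simp
    · intro b _ hb
      simp only [ite_eq_right_iff]
      intro hbk; exact absurd (Fin.ext hbk) hb
    · simp
  · next h =>
    apply Finset.sum_eq_zero
    intro j _
    have hj : (j : ℕ) ≠ k := by have := j.isLt; omega
    simp [hj]

lemma triQ_row_split {n : ℕ} (c d : ℝ) (x : ℕ → ℝ) (i : Fin n) (L : ℕ)
    (hL : ((i : ℕ) = 0 ∧ L = n) ∨ ((i : ℕ) ≠ 0 ∧ L = (i : ℕ) - 1)) (j : Fin n) :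
      triQ n 1 c d i j * x j =
      (if (j : ℕ) = (i : ℕ) then
        (if (i : ℕ) = 0 ∨ (i : ℕ) = n - 1 then d else c) * x j else 0)
      + (if (j : ℕ) = (i : ℕ) + 1 then -x j else 0)
      + (if (j : ℕ) = L then -x j else 0) := by
  have hj := j.isLt
  have hi := i.isLt
  simp only [triQ, Matrix.of_apply, Fin.ext_iff]
  rcases hL with ⟨h0, rfl⟩ | ⟨h0, rfl⟩ <;>
    split_ifs <;> first | ring1 | (exfalso; omega)

lemma triQ_mulVec {n : ℕ} (c d : ℝ) (x : ℕ → ℝ) (i : Fin n) :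
    (Matrix.mulVec (triQ n 1 c d) (fun j : Fin n => x j)) i =
      (if (i : ℕ) = 0 ∨ (i : ℕ) = n - 1 then d else c) * x i
      - (if (i : ℕ) = 0 then 0 else x ((i : ℕ) - 1))
      - (if (i : ℕ) + 1 = n then 0 else x ((i : ℕ) + 1)) := by
  classical
  have hi := i.isLt
  by_cases hi0 : (i : ℕ) = 0
  · rw [show (Matrix.mulVec (triQ n 1 c d) (fun j : Fin n => x j)) i
        = ∑ j : Fin n, triQ n 1 c d i j * x j from rfl,
      Finset.sum_congr rfl (fun j _ => triQ_row_split c d x i n (Or.inl ⟨hi0, rfl⟩) j),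
      Finset.sum_add_distrib, Finset.sum_add_distrib,
      sum_ite_coe, sum_ite_coe, sum_ite_coe]
    rw [dif_pos hi, dif_neg (lt_irrefl n), if_pos hi0]
    by_cases hi1 : (i : ℕ) + 1 = n
    · rw [dif_neg (by omega), if_pos hi1]
      simp [hi0]
    · rw [dif_pos (by omega), if_neg hi1]
      simp [hi0]
      ring
  · rw [show (Matrix.mulVec (triQ n 1 c d) (fun j : Fin n => x j)) i
        = ∑ j : Fin n, triQ n 1 c d i j * x j from rfl,
      Finset.sum_congr rfl (fun j _ => triQ_row_split c d x i ((i : ℕ) - 1)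
        (Or.inr ⟨hi0, rfl⟩) j),
      Finset.sum_add_distrib, Finset.sum_add_distrib,
      sum_ite_coe, sum_ite_coe, sum_ite_coe]
    rw [dif_pos hi, dif_pos (show (i : ℕ) - 1 < n by omega), if_neg hi0]
    by_cases hi1 : (i : ℕ) + 1 = n
    · rw [dif_neg (by omega), if_pos hi1]
      ring
    · rw [dif_pos (by omega), if_neg hi1]
      ring

set_option maxHeartbeats 1000000 in
/-- Theorem, bounds on row sums, 0 < φ < 1: with b = 1,
c = (1+γ+φ²)/φ, d = (1+γ)/φ, Q is invertible and every row sum sᵢ of Q⁻¹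
satisfies 1/(d − φ) < sᵢ < 1/(c − 2). -/
theorem rowSum_bounds_pos_phi (n : ℕ) (hn : 2 ≤ n) (φ γ : ℝ)
    (hφ0 : 0 < φ) (hφ1 : φ < 1) (hγ : 0 < γ) :
    let c : ℝ := (1 + γ + φ ^ 2) / φ
    let d : ℝ := (1 + γ) / φ
    IsUnit (triQ n 1 c d) ∧
    ∀ i : Fin n,
      1 / (d - φ) < (∑ j, (triQ n 1 c d)⁻¹ i j) ∧
      (∑ j, (triQ n 1 c d)⁻¹ i j) < 1 / (c - 2) := by
  intro c d
  have hcd : c = (1 + γ + φ ^ 2) / φ := rfl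
  have hdd : d = (1 + γ) / φ := rfl
  clear_value c d
  have hφ : φ ≠ 0 := ne_of_gt hφ0
  have hc2 : 2 < c := by
    rw [hcd, lt_div_iff₀ hφ0]; nlinarith [sq_nonneg (1 - φ)]
  have hdc : d = c - φ := by rw [hcd, hdd]; field_simp; ring
  have hdφ : d - φ = c - 2 * φ := by rw [hdc]; ring
  have hcφ : c * φ = 1 + γ + φ ^ 2 := by rw [hcd]; field_simp
  -- the small root r of x² - cx + 1
  have h4 : (0:ℝ) ≤ c ^ 2 - 4 := by nlinarith
  have hsq2 : Real.sqrt (c ^ 2 - 4) ^ 2 = c ^ 2 - 4 := Real.sq_sqrt h4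
  have hsq0 : 0 ≤ Real.sqrt (c ^ 2 - 4) := Real.sqrt_nonneg _
  obtain ⟨r, hrdef⟩ : ∃ r : ℝ, r = (c - Real.sqrt (c ^ 2 - 4)) / 2 := ⟨_, rfl⟩
  have hcr : c * r = 1 + r ^ 2 := by
    rw [hrdef]; linear_combination (-1/4 : ℝ) * hsq2
  have hr0 : 0 < r := by rw [hrdef]; nlinarith [hsq2, hsq0]
  have hr1 : r < 1 := by rw [hrdef]; nlinarith [hsq2, hsq0]
  have hφr : φ * r < 1 := by nlinarith
  have h5 : (φ - r) * (1 - φ * r) = γ * r := by linear_combination r * hcφ - φ * hcr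
  have hrφ : r < φ := by nlinarith [mul_pos hγ hr0]
  -- constants
  obtain ⟨q, hqdef⟩ : ∃ q : ℝ, q = r ^ (n - 2) := ⟨_, rfl⟩
  have hq0 : 0 < q := hqdef ▸ pow_pos hr0 _
  have e1 : r ^ (n - 1) = q * r := by
    rw [hqdef, ← pow_succ]; congr 1; omega
  have hqr1 : q * r < 1 := by
    rw [← e1]
    exact pow_lt_one₀ hr0.le hr1 (by omega)
  have hq1 : q ≤ 1 := hqdef ▸ pow_le_one₀ hr0.le hr1.le
  have hc2ne : c - 2 ≠ 0 := by intro h; rw [sub_eq_zero] at h; exact absurd h.symm (ne_of_lt hc2)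
  obtain ⟨K, hKdef⟩ : ∃ K : ℝ, K = 1 / (c - 2) := ⟨_, rfl⟩
  have hK : (c - 2) * K = 1 := by
    rw [hKdef, mul_one_div, div_self hc2ne]
  have hK0 : 0 < K := by rw [hKdef]; exact one_div_pos.mpr (by linarith)
  obtain ⟨Bb, hBbq⟩ : ∃ Bb : ℝ, Bb = (c - φ) * (1 + q * r) - r - q := ⟨_, rfl⟩
  have hD : r * Bb = 1 - φ * r - φ * q * r ^ 2 + q * r ^ 3 := by
    linear_combination r * hBbq + (1 + q * r) * hcr
  have hp1 : q * r * r < 1 := by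
    have h6 : q * r * r < 1 * r := mul_lt_mul_of_pos_right hqr1 hr0
    rw [one_mul] at h6; linarith
  have hDpos : 0 < 1 - φ * r - φ * q * r ^ 2 + q * r ^ 3 := by
    have ha1 : 0 < (1 - q * r * r) * (φ - r) :=
      mul_pos (sub_pos.2 hp1) (sub_pos.2 hrφ)
    have ha2 : 0 < (1 - φ) * (1 + r) :=
      mul_pos (sub_pos.2 hφ1) (by linarith)
    nlinarith [ha1, ha2]
  have hBb0 : 0 < Bb := by
    by_contra hle
    push_neg at hle
    have h7 : r * Bb ≤ r * 0 := mul_le_mul_of_nonneg_left hle hr0.le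
    rw [mul_zero] at h7
    linarith [hD, hDpos]
  have hBbne : Bb ≠ 0 := ne_of_gt hBb0
  obtain ⟨A, hAdef⟩ : ∃ A : ℝ, A = -((1 - φ) * K) / Bb := ⟨_, rfl⟩
  have hABb : A * Bb = -((1 - φ) * K) := by
    rw [hAdef]; field_simp
  have hA0 : A < 0 := by
    rw [hAdef]
    apply div_neg_of_neg_of_pos _ hBb0
    have : 0 < (1 - φ) * K := mul_pos (by linarith) hK0
    linarith
  -- the explicit solution
  obtain ⟨F, hFdef⟩ : ∃ F : ℕ → ℝ,
      F = fun j => K + A * (r ^ j + r ^ (n - 1 - j)) := ⟨_, rfl⟩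
  have hQs : Matrix.mulVec (triQ n 1 c d) (fun j : Fin n => F j) = fun _ => 1 := by
    funext i
    rw [triQ_mulVec]
    have hi := i.isLt
    by_cases hi0 : (i : ℕ) = 0
    · rw [if_pos (Or.inl hi0), if_pos hi0, if_neg (show ¬(i : ℕ) + 1 = n by omega)]
      simp only [hFdef, hi0]
      rw [show (0:ℕ) + 1 = 1 from rfl, show n - 1 - 0 = n - 1 by omega,
        show n - 1 - 1 = n - 2 by omega, e1, ← hqdef, hdc]
      simp only [pow_zero, pow_one]
      linear_combination hABb + hK - A * hBbq
    · by_cases hin : (i : ℕ) = n - 1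
      · rw [if_pos (Or.inr hin), if_neg hi0, if_pos (show (i : ℕ) + 1 = n by omega)]
        simp only [hFdef, hin]
        rw [show n - 1 - (n - 1) = 0 by omega, show n - 1 - 1 = n - 2 by omega,
          show n - 1 - (n - 2) = 1 by omega, e1, ← hqdef, hdc]
        simp only [pow_zero, pow_one]
        linear_combination hABb + hK - A * hBbq
      · rw [if_neg (by push_neg; exact ⟨hi0, hin⟩), if_neg hi0,
          if_neg (show ¬(i : ℕ) + 1 = n by omega)]
        simp only [hFdef]
        have eu1 : r ^ (i : ℕ) = r ^ ((i : ℕ) - 1) * r := by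
          rw [← pow_succ]; congr 1; omega
        have eu2 : r ^ ((i : ℕ) + 1) = r ^ ((i : ℕ) - 1) * r ^ 2 := by
          rw [← pow_add]; congr 1; omega
        have ev1 : r ^ (n - 1 - (i : ℕ)) = r ^ (n - 2 - (i : ℕ)) * r := by
          rw [← pow_succ]; congr 1; omega
        have ev2 : r ^ (n - 1 - ((i : ℕ) - 1)) = r ^ (n - 2 - (i : ℕ)) * r ^ 2 := by
          rw [← pow_add]; congr 1; omega
        have ev3 : n - 1 - ((i : ℕ) + 1) = n - 2 - (i : ℕ) := by omega
        rw [eu1, eu2, ev1, ev2, ev3]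
        linear_combination hK + (A * (r ^ ((i : ℕ) - 1) + r ^ (n - 2 - (i : ℕ)))) * hcr
  -- invertibility by strict diagonal dominance
  have hd1 : 1 < d := by rw [hdc]; linarith
  have hdet : (triQ n 1 c d).det ≠ 0 := by
    apply det_ne_zero_of_sum_row_lt_diag
    intro i
    have hi := i.isLt
    have hQii : triQ n 1 c d i i =
        (if (i : ℕ) = 0 ∨ (i : ℕ) = n - 1 then d else c) := by
      simp [triQ]
    have hcongr : ∀ j ∈ Finset.univ.erase i,
        ‖triQ n 1 c d i j‖ = -(triQ n 1 c d i j) := by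
      intro j hj
      have hji : i ≠ j := (Finset.ne_of_mem_erase hj).symm
      simp only [triQ, Matrix.of_apply, if_neg hji]
      split_ifs <;> simp
    rw [Finset.sum_congr rfl hcongr, Finset.sum_neg_distrib,
      Finset.sum_erase_eq_sub (Finset.mem_univ i)]
    have huniv : ∑ j, triQ n 1 c d i j =
        Matrix.mulVec (triQ n 1 c d) (fun j : Fin n => (fun _ : ℕ => (1:ℝ)) j) i := by
      simp [Matrix.mulVec, dotProduct]
    rw [huniv, triQ_mulVec c d (fun _ => (1:ℝ)) i, hQii]
    rw [Real.norm_eq_abs]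
    by_cases hi0 : (i : ℕ) = 0
    · rw [if_pos (Or.inl hi0), if_pos hi0, if_neg (show ¬(i : ℕ) + 1 = n by omega),
        abs_of_pos (by linarith)]
      linarith
    · by_cases hin : (i : ℕ) = n - 1
      · rw [if_pos (Or.inr hin), if_neg hi0, if_pos (show (i : ℕ) + 1 = n by omega),
          abs_of_pos (by linarith)]
        linarith
      · rw [if_neg (by push_neg; exact ⟨hi0, hin⟩), if_neg hi0,
          if_neg (show ¬(i : ℕ) + 1 = n by omega), abs_of_pos (by linarith)]
        linarith
  have hdetU : IsUnit (triQ n 1 c d).det := isUnit_iff_ne_zero.mpr hdet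
  refine ⟨(Matrix.isUnit_iff_isUnit_det _).mpr hdetU, ?_⟩
  -- row sums of the inverse equal F
  have hsol : (fun j : Fin n => F j) =
      Matrix.mulVec (triQ n 1 c d)⁻¹ (fun _ => 1) := by
    have h2 := congrArg (fun v => Matrix.mulVec (triQ n 1 c d)⁻¹ v) hQs
    rwa [Matrix.mulVec_mulVec, Matrix.nonsing_inv_mul _ hdetU, Matrix.one_mulVec] at h2
  intro i
  have hsum : (∑ j, (triQ n 1 c d)⁻¹ i j) = F (i : ℕ) := by
    have h3 : (∑ j, (triQ n 1 c d)⁻¹ i j) =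
        Matrix.mulVec (triQ n 1 c d)⁻¹ (fun _ => 1) i := by
      simp [Matrix.mulVec, dotProduct]
    rw [h3, ← hsol]
  rw [hsum]
  clear hsum hsol hQs hdet hdetU
  have hi := i.isLt
  have hposk : (0:ℝ) < r ^ (i : ℕ) + r ^ (n - 1 - (i : ℕ)) := by positivity
  constructor
  · -- lower bound
    rw [hdφ]
    have hc2φ : 0 < c - 2 * φ := by linarith
    have hs0eq : (K + A * (1 + q * r)) * ((1 - r) * (r * Bb)) = r * (1 - q * r ^ 2) := by
      linear_combination (1 - r) * r * (1 + q * r) * hABb + (1 - r) * r * K * hBbq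
        + (K * (1 - r) * (1 + q * r) - K * (1 - q * r ^ 2)) * hcr
        + r * (1 - q * r ^ 2) * hK
    have key2 : (K + A * (1 + q * r)) * (c - 2 * φ) * ((1 - r) * (r * Bb))
        - (1 - r) * (r * Bb) = (1 + r) * (1 - φ) * r * (1 - q * r) := by
      linear_combination (c - 2 * φ) * hs0eq + (1 - q * r ^ 2) * hcr
        - (1 - r) * (1 + q * r) * hcr - (1 - r) * r * hBbq
    have hX : 0 < (1 - r) * (r * Bb) :=
      mul_pos (by linarith) (mul_pos hr0 hBb0)
    have hRHS : 0 < (1 + r) * (1 - φ) * r * (1 - q * r) :=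
      mul_pos (mul_pos (mul_pos (by linarith) (by linarith)) hr0) (by linarith)
    have hF0 : 1 / (c - 2 * φ) < K + A * (1 + q * r) := by
      rw [div_lt_iff₀ hc2φ]
      have h9 : ((K + A * (1 + q * r)) * (c - 2 * φ) - 1) * ((1 - r) * (r * Bb))
          = (1 + r) * (1 - φ) * r * (1 - q * r) := by linear_combination key2
      by_contra hle
      push_neg at hle
      have h10 : ((K + A * (1 + q * r)) * (c - 2 * φ) - 1) * ((1 - r) * (r * Bb))
          ≤ 0 * ((1 - r) * (r * Bb)) :=
        mul_le_mul_of_nonneg_right (by linarith) hX.le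
      rw [zero_mul] at h10
      linarith
    have hmono : K + A * (1 + q * r) ≤ F (i : ℕ) := by
      simp only [hFdef]
      have hsplit : r ^ (i : ℕ) * r ^ (n - 1 - (i : ℕ)) = q * r := by
        rw [← e1, ← pow_add]; congr 1; omega
      have h1 : r ^ (i : ℕ) ≤ 1 := pow_le_one₀ hr0.le hr1.le
      have h2 : r ^ (n - 1 - (i : ℕ)) ≤ 1 := pow_le_one₀ hr0.le hr1.le
      have hP : 0 ≤ (1 - r ^ (i : ℕ)) * (1 - r ^ (n - 1 - (i : ℕ))) :=
        mul_nonneg (sub_nonneg.2 h1) (sub_nonneg.2 h2)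
      have hexp : (1 - r ^ (i : ℕ)) * (1 - r ^ (n - 1 - (i : ℕ)))
          = 1 - r ^ (i : ℕ) - r ^ (n - 1 - (i : ℕ)) + q * r := by
        linear_combination hsplit
      have hle2 : r ^ (i : ℕ) + r ^ (n - 1 - (i : ℕ)) ≤ 1 + q * r := by linarith
      have h11 := mul_le_mul_of_nonpos_left hle2 hA0.le
      linarith
    linarith
  · -- upper bound
    simp only [hFdef]
    have hneg := mul_neg_of_neg_of_pos hA0 hposk
    rw [show (1:ℝ) / (c - 2) = K from hKdef.symm]
    linarith
end

section
/- Let n ≥ 2, let φ be real with −1 < φ < 0 and γ > 0, and set b = −1, c = (1+γ+φ²)/(−φ), d = (1+γ)/(−φ), λ = −φ. Then the corresponding n×n tridiagonal matrix Q is invertible and the sum s_i of the i-th row of Q^{-1} satisfies 2/(c+2) − 1/(d+φ) < s_i < 1/(d+φ) for every i = 1, …, n. -/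
open Matrix


lemma triQ_mulVec_apply (n : ℕ) (b c d : ℝ) (x : Fin n → ℝ) (k : Fin n) :
    ((triQ n b c d) *ᵥ x) k =
      (if (k : ℕ) = 0 ∨ (k : ℕ) = n - 1 then d else c) * x k
      + (if h : (k : ℕ) + 1 < n then (-b) * x ⟨(k : ℕ) + 1, h⟩ else 0)
      + (if h : 0 < (k : ℕ) then
          (-b) * x ⟨(k : ℕ) - 1, lt_of_le_of_lt (Nat.pred_le _) k.isLt⟩ else 0) := by
  classical
  have hsplit : ∀ j : Fin n, triQ n b c d k j * x j =
      (if k = j then (if (k : ℕ) = 0 ∨ (k : ℕ) = n - 1 then d else c) * x j else 0)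
      + (if (k : ℕ) + 1 = (j : ℕ) then (-b) * x j else 0)
      + (if (j : ℕ) + 1 = (k : ℕ) then (-b) * x j else 0) := by
    intro j
    simp only [triQ, Matrix.of_apply, ← Fin.val_inj]
    split_ifs <;> (try ring) <;> (try (exfalso; omega))
  have hS : ((triQ n b c d) *ᵥ x) k = ∑ j, triQ n b c d k j * x j := rfl
  rw [hS, Finset.sum_congr rfl fun j _ => hsplit j, Finset.sum_add_distrib,
    Finset.sum_add_distrib]
  congr 1
  · congr 1
    · rw [Finset.sum_ite_eq]
      simp
    · by_cases h : (k : ℕ) + 1 < n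
      · rw [dif_pos h]
        have : ∀ j : Fin n, (if (k : ℕ) + 1 = (j : ℕ) then (-b) * x j else 0)
            = (if (⟨(k : ℕ) + 1, h⟩ : Fin n) = j then (-b) * x j else 0) := by
          intro j
          congr 1
          simp only [← Fin.val_inj]
        rw [Finset.sum_congr rfl fun j _ => this j, Finset.sum_ite_eq]
        simp
      · rw [dif_neg h]
        exact Finset.sum_eq_zero fun j _ => if_neg (by have := j.isLt; omega)
  · by_cases h : 0 < (k : ℕ)
    · rw [dif_pos h]
      have : ∀ j : Fin n, (if (j : ℕ) + 1 = (k : ℕ) then (-b) * x j else 0)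
          = (if (⟨(k : ℕ) - 1, lt_of_le_of_lt (Nat.pred_le _) k.isLt⟩ : Fin n) = j
              then (-b) * x j else 0) := by
        intro j
        congr 1
        simp only [← Fin.val_inj, eq_iff_iff]
        omega
      rw [Finset.sum_congr rfl fun j _ => this j, Finset.sum_ite_eq]
      simp
    · rw [dif_neg h]
      exact Finset.sum_eq_zero fun j _ => if_neg (by omega)

lemma triQ_max_principle (n : ℕ) (hn : 2 ≤ n) (c d g : ℝ) (hc : 2 < c) (hd : 1 < d)
    (hg : 0 ≤ g) (z : Fin n → ℝ)
    (hz : ∀ k : Fin n, (triQ n (-1 : ℝ) c d *ᵥ z) k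
        = if (k : ℕ) = 0 ∨ (k : ℕ) = n - 1 then g else 0) :
    ∀ i, |z i| ≤ g / (d - 1) := by
  haveI : Nonempty (Fin n) := ⟨⟨0, by omega⟩⟩
  obtain ⟨i₀, hmax⟩ := Finite.exists_max fun i : Fin n => |z i|
  intro i
  refine le_trans (hmax i) ?_
  have hkey := hz i₀
  rw [triQ_mulVec_apply] at hkey
  simp only [neg_neg, one_mul] at hkey
  have hd0 : (0:ℝ) < d - 1 := by linarith
  have hin := i₀.isLt
  by_cases hbd : (i₀ : ℕ) = 0 ∨ (i₀ : ℕ) = n - 1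
  · simp only [if_pos hbd] at hkey
    have hnb : ∃ jj : Fin n, d * z i₀ + z jj = g := by
      rcases hbd with h0 | h1
      · rw [dif_pos (show (i₀:ℕ)+1 < n by omega), dif_neg (by omega)] at hkey
        exact ⟨_, by linarith [hkey]⟩
      · rw [dif_neg (show ¬((i₀:ℕ)+1 < n) by omega),
          dif_pos (show 0 < (i₀:ℕ) by omega)] at hkey
        exact ⟨_, by linarith [hkey]⟩
    obtain ⟨jj, hjj⟩ := hnb
    have hj := hmax jj
    have habs : d * |z i₀| ≤ g + |z i₀| := by
      calc d * |z i₀| = |d * z i₀| := by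
            rw [abs_mul, abs_of_pos (show (0:ℝ) < d by linarith)]
        _ = |g - z jj| := by rw [show d * z i₀ = g - z jj by linarith]
        _ ≤ |g| + |z jj| := abs_sub _ _
        _ ≤ g + |z i₀| := by rw [abs_of_nonneg hg]; linarith
    rw [le_div_iff₀ hd0]
    linarith
  · simp only [if_neg hbd] at hkey
    push_neg at hbd
    rw [dif_pos (show (i₀:ℕ)+1 < n by omega), dif_pos (show 0 < (i₀:ℕ) by omega)] at hkey
    set j1 : Fin n := ⟨(i₀:ℕ)+1, by omega⟩
    set j2 : Fin n := ⟨(i₀:ℕ)-1, by omega⟩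
    have hj1 := hmax j1
    have hj2 := hmax j2
    have habs : c * |z i₀| ≤ 2 * |z i₀| := by
      calc c * |z i₀| = |c * z i₀| := by
            rw [abs_mul, abs_of_pos (show (0:ℝ) < c by linarith)]
        _ = |(-(z j1)) + (-(z j2))| := by rw [show c * z i₀ = -z j1 + -z j2 by linarith]
        _ ≤ |z j1| + |z j2| := by simpa using abs_add_le (-(z j1)) (-(z j2))
        _ ≤ 2 * |z i₀| := by linarith
    have hz0 : |z i₀| ≤ 0 := by nlinarith
    have : (0:ℝ) ≤ g / (d - 1) := div_nonneg hg (le_of_lt hd0)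
    linarith

/-- Theorem, bounds on row sums, −1 < φ < 0: with b = −1,
c = (1+γ+φ²)/(−φ), d = (1+γ)/(−φ), Q is invertible and every row sum sᵢ of Q⁻¹
satisfies 2/(c+2) − 1/(d+φ) < sᵢ < 1/(d+φ). -/
theorem rowSum_bounds_neg_phi (n : ℕ) (hn : 2 ≤ n) (φ γ : ℝ)
    (hφ0 : -1 < φ) (hφ1 : φ < 0) (hγ : 0 < γ) :
    let c : ℝ := (1 + γ + φ ^ 2) / (-φ)
    let d : ℝ := (1 + γ) / (-φ)
    IsUnit (triQ n (-1) c d) ∧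
    ∀ i : Fin n,
      2 / (c + 2) - 1 / (d + φ) < (∑ j, (triQ n (-1) c d)⁻¹ i j) ∧
      (∑ j, (triQ n (-1) c d)⁻¹ i j) < 1 / (d + φ) := by
  intro c d
  have hc : c = (1 + γ + φ ^ 2) / (-φ) := rfl
  have hd : d = (1 + γ) / (-φ) := rfl
  clear_value c d
  set l : ℝ := -φ with hldef
  have hl0 : 0 < l := by rw [hldef]; linarith
  have hl1 : l < 1 := by rw [hldef]; linarith
  have hln : l ≠ 0 := ne_of_gt hl0
  have hφl : φ = -l := by rw [hldef]; ring
  have hdl : d * l = 1 + γ := by rw [hd, div_mul_cancel₀ _ hln]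
  have hcl : c * l = 1 + γ + l ^ 2 := by
    rw [hc, hφl]; field_simp; try ring
  have h2l : 2 - l < d := by
    nlinarith [hdl, hγ, hl0, hl1, sq_nonneg (1 - l), mul_pos hl0 hl0]
  have hd1 : (1:ℝ) < d := by linarith
  have hcd : c = d + l := by
    have h1 : c * l = (d + l) * l := by rw [hcl]; nlinarith [hdl]
    exact mul_right_cancel₀ hln h1
  have hc2 : (2:ℝ) < c := by rw [hcd]; linarith
  set Q := triQ n (-1 : ℝ) c d with hQdef
  have hker : ∀ z : Fin n → ℝ, Q *ᵥ z = 0 → z = 0 := by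
    intro z hz0
    have hb := triQ_max_principle n hn c d 0 hc2 hd1 le_rfl z (fun k => by
      rw [← hQdef, hz0]; simp)
    funext i
    have h0 : |z i| = 0 := le_antisymm (by simpa using hb i) (abs_nonneg _)
    exact abs_eq_zero.mp h0
  have hinj : Function.Injective Q.mulVec := by
    intro x y hxy
    have h0 : Q *ᵥ (x - y) = 0 := by rw [Matrix.mulVec_sub, hxy, sub_self]
    exact sub_eq_zero.mp (hker _ h0)
  have hunit : IsUnit Q := Matrix.mulVec_injective_iff_isUnit.mp hinj
  refine ⟨hunit, ?_⟩
  have hdet : IsUnit Q.det := (Matrix.isUnit_iff_isUnit_det Q).mp hunit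
  set s : Fin n → ℝ := Q⁻¹ *ᵥ (1 : Fin n → ℝ) with hsdef
  have hs_eq : ∀ i, s i = ∑ j, Q⁻¹ i j := by
    intro i; rw [hsdef]; simp [Matrix.mulVec, dotProduct]
  have hQs : Q *ᵥ s = 1 := by
    rw [hsdef, Matrix.mulVec_mulVec, Matrix.mul_nonsing_inv _ hdet, Matrix.one_mulVec]
  set K : ℝ := 1 / (c + 2) with hK
  set g : ℝ := (l + 1) / (c + 2) with hgdef
  have hc2pos : (0:ℝ) < c + 2 := by linarith
  have hgpos : 0 < g := div_pos (by linarith) hc2pos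
  have hdlne : d + l + 2 ≠ 0 := ne_of_gt (by linarith)
  set e : Fin n → ℝ := fun i => s i - K with hedef
  have he : ∀ k : Fin n, (Q *ᵥ e) k = if (k:ℕ) = 0 ∨ (k:ℕ) = n - 1 then g else 0 := by
    intro k
    have hes : e = s - K • (1 : Fin n → ℝ) := by
      funext i; simp [hedef, smul_eq_mul]
    have h1 : (Q *ᵥ e) k = (Q *ᵥ s) k - K * (Q *ᵥ (1 : Fin n → ℝ)) k := by
      rw [hes, Matrix.mulVec_sub, Matrix.mulVec_smul]
      simp [smul_eq_mul]
    rw [h1, hQs]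
    rw [hQdef, triQ_mulVec_apply]
    simp only [neg_neg, one_mul, mul_one, Pi.one_apply]
    have hkn := k.isLt
    by_cases hbd : (k:ℕ) = 0 ∨ (k:ℕ) = n - 1
    · simp only [if_pos hbd]
      rcases hbd with h0 | h1'
      · rw [dif_pos (show (k:ℕ)+1 < n by omega), dif_neg (by omega)]
        rw [hK, hgdef, hcd]
        field_simp
        try ring
      · rw [dif_neg (show ¬((k:ℕ)+1 < n) by omega), dif_pos (show 0 < (k:ℕ) by omega)]
        rw [hK, hgdef, hcd]
        field_simp
        try ring
    · simp only [if_neg hbd]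
      push_neg at hbd
      rw [dif_pos (show (k:ℕ)+1 < n by omega), dif_pos (show 0 < (k:ℕ) by omega)]
      rw [hK]
      field_simp
      ring
  have hbnd := triQ_max_principle n hn c d g hc2 hd1 (le_of_lt hgpos) e
    (fun k => by rw [← hQdef]; exact he k)
  have hdlpos : (0:ℝ) < d - l := by linarith
  have hstep : g / (d - 1) < 1 / (d - l) - 1 / (c + 2) := by
    have h1 : g / (d - 1) = (l + 1) / ((c + 2) * (d - 1)) := by rw [hgdef, div_div]
    have h2 : 1 / (d - l) - 1 / (c + 2) = (2 * l + 2) / ((c + 2) * (d - l)) := by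
      rw [hcd]
      field_simp
      ring
    rw [h1, h2, div_lt_div_iff₀ (mul_pos hc2pos (by linarith)) (mul_pos hc2pos hdlpos)]
    nlinarith [mul_pos hc2pos (show (0:ℝ) < d - (2 - l) by linarith), hl0, hc2pos]
  intro i
  obtain ⟨hlo, hhi⟩ := abs_le.mp (hbnd i)
  have hei : e i = s i - K := rfl
  rw [hei] at hlo hhi
  have hphi : d + φ = d - l := by rw [hφl]; ring
  have h2K : 2 / (c + 2) = 2 * K := by rw [hK]; ring
  rw [← hs_eq i, hphi, h2K]
  constructor
  · linarith
  · linarith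
end
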